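/- Let k ≥ 3 be an odd integer and let G be the free group on the 2k+1 generators D, D̄, C₁, …, C_{k−1}, U₁, …, U_k; extend the C's to all integers by C_{n+k−1} = C_n for every n ∈ ℤ. Then there exists a family (u_n)_{n∈ℤ} of elements of the integral group ring ℤ[G] such that: (1) u_n = U_n (the corresponding free generator, viewed in ℤ[G]) for 1 ≤ n ≤ k; (2) every u_n is a finite sum of elements of G, i.e., all coefficients of u_n are nonnegative integers; (3) for every n ∈ ℤ, if n is even then u_{n−k}·D·u_n = C_n + u_{n−1}·D̄·u_{n+1−k}, and if n is odd then u_n·D̄·u_{n−k} = C_n + u_{n+1−k}·D·u_{n−1}; and (4) there exists H ∈ ℤ[G] (a noncommutative conserved quantity) such that for every n ∈ ℤ, if n is even then D̄·u_{n+1−k} + D·u_{n+k−1} = H·u_n, and if n is odd then u_{n+1−k}·D + u_{n+k−1}·D̄ = u_n·H. -/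

import Mathlib

noncomputable section

/-- The `2k+1` free generators `D, D̄, C₁, …, C_{k-1}, U₁, …, U_k`.
(`C i` stands for `C_{i+1}` and `U i` for `U_{i+1}`.) -/
inductive KGen (k : ℕ) : Type
  | D : KGen k
  | Dbar : KGen k
  | C : Fin (k - 1) → KGen k
  | U : Fin k → KGen k

/-- The free group `F_{2k+1}` on the above generators. -/
abbrev KG (k : ℕ) := FreeGroup (KGen k)

/-- The integral group ring `ℤ F_{2k+1}`. -/
abbrev KAlg (k : ℕ) := MonoidAlgebra ℤ (KG k)

def Dk (k : ℕ) : KAlg k := MonoidAlgebra.of ℤ (KG k) (FreeGroup.of KGen.D)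

def Dbark (k : ℕ) : KAlg k := MonoidAlgebra.of ℤ (KG k) (FreeGroup.of KGen.Dbar)

/-- `C_n` for `n ∈ ℤ`, extended `(k-1)`-periodically: `C_{n+k-1} = C_n`. -/
def Ck (k : ℕ) (hk : 3 ≤ k) (n : ℤ) : KAlg k :=
  MonoidAlgebra.of ℤ (KG k)
    (FreeGroup.of (KGen.C ⟨((n - 1) % ((k : ℤ) - 1)).toNat, by
      have h1 : (0 : ℤ) < (k : ℤ) - 1 := by
        have : (3 : ℤ) ≤ (k : ℤ) := by exact_mod_cast hk
        omega
      have h2 := Int.emod_lt_of_pos (n - 1) h1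
      have h3 := Int.emod_nonneg (n - 1) (by omega : ((k : ℤ) - 1) ≠ 0)
      omega⟩))

namespace KP

def og (k : ℕ) : KG k →* KAlg k := MonoidAlgebra.of ℤ (KG k)

variable (k : ℕ) (hk : 3 ≤ k)

def gD : KG k := FreeGroup.of KGen.D
def gE : KG k := FreeGroup.of KGen.Dbar

def gU (n : ℤ) : KG k :=
  if h : 0 < k then FreeGroup.of (KGen.U ⟨(n - 1).toNat % k, Nat.mod_lt _ h⟩) else 1

lemma og_mul (a b : KG k) : og k a * og k b = og k (a * b) := (map_mul _ _ _).symm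

lemma og_one : og k (1 : KG k) = 1 := map_one _

lemma og_inv_mul (a : KG k) : og k a⁻¹ * og k a = 1 := by
  rw [og_mul, inv_mul_cancel, og_one]

lemma og_mul_inv (a : KG k) : og k a * og k a⁻¹ = 1 := by
  rw [og_mul, mul_inv_cancel, og_one]

lemma Dk_eq : Dk k = og k (gD k) := rfl
lemma Dbark_eq : Dbark k = og k (gE k) := rfl

lemma Ck_eq (n : ℤ) :
    Ck k hk n = og k (FreeGroup.of (KGen.C ⟨((n - 1) % ((k : ℤ) - 1)).toNat, by
      have : (3:ℤ) ≤ (k:ℤ) := by exact_mod_cast hk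
      have h2 := Int.emod_lt_of_pos (n - 1) (by omega : (0:ℤ) < (k:ℤ)-1)
      have h3 := Int.emod_nonneg (n - 1) (by omega : ((k : ℤ) - 1) ≠ 0)
      omega⟩)) := rfl

lemma ck_congr {n₁ n₂ : ℤ} (h : ((k:ℤ) - 1) ∣ (n₁ - n₂)) :
    Ck k hk n₁ = Ck k hk n₂ := by
  have hmod : (n₁ - 1) % ((k:ℤ) - 1) = (n₂ - 1) % ((k:ℤ) - 1) :=
    Int.ModEq.sub_right 1 (Int.modEq_iff_dvd.mpr (by simpa using (dvd_neg.mpr h)))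
  unfold Ck
  congr 2
  · congr 1
    exact Fin.ext (by simp only [hmod])


lemma ck_period (n : ℤ) : Ck k hk (n + ((k:ℤ) - 1)) = Ck k hk n :=
  ck_congr k hk ⟨1, by ring⟩

/-! ### The base window -/

def bwin : ℕ → KAlg k
  | 0 => og k (gU k k)
  | (t+1) =>
    if t + 1 < k then og k (gU k ((k : ℤ) - (t+1)))
    else if t + 1 ≤ 2*k - 2 then
      if Even ((2*k : ℤ) - (t+1)) then
        (Ck k hk ((2*k : ℤ) - (t+1)) +
            og k (gU k ((2*k : ℤ) - (t+1) - 1) * gE k) * bwin t) *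
          og k ((gU k ((2*k : ℤ) - (t+1)))⁻¹ * (gD k)⁻¹)
      else
        og k ((gE k)⁻¹ * (gU k ((2*k : ℤ) - (t+1)))⁻¹) *
          (Ck k hk ((2*k : ℤ) - (t+1)) +
            bwin t * og k (gD k * gU k ((2*k : ℤ) - (t+1) - 1)))
    else 0

def base (m : ℤ) : KAlg k := bwin k hk ((k:ℤ) - m).toNat

def Hh : KAlg k :=
  og k (gU k 1)⁻¹ * (base k hk (2 - k) * og k (gD k) + og k (gU k k * gE k))

/-! ### The mirror automorphism φ -/

def phiGen : KGen k → KGen k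
  | KGen.D => KGen.Dbar
  | KGen.Dbar => KGen.D
  | KGen.U i => KGen.U i.rev
  | KGen.C i => KGen.C ⟨(k - (i:ℕ)) % (k-1), Nat.mod_lt _ (by have := i.isLt; omega)⟩

def phiG : KG k →* KG k := FreeGroup.map (phiGen k)

def phiA : KAlg k →+* KAlg k := MonoidAlgebra.mapDomainRingHom ℤ (phiG k)

/-! ### The sequence -/

def fwd : ℕ → KAlg k
  | i =>
    if i ≤ 2*k - 2 then base k hk (2 - (k:ℤ) + i)
    else
      if Even ((2 : ℤ) - k + i) then
        og k (gD k)⁻¹ *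
          (Hh k hk * fwd (i - (k-1)) - og k (gE k) * fwd (i - (2*k-2)))
      else
        (fwd (i - (k-1)) * Hh k hk - fwd (i - (2*k-2)) * og k (gD k)) * og k (gE k)⁻¹
  termination_by i => i
  decreasing_by all_goals omega

def uu (n : ℤ) : KAlg k :=
  if 2 - (k:ℤ) ≤ n then fwd k hk (n + k - 2).toNat
  else phiA k (fwd k hk (2*k - 1 - n).toNat)

/-! ### Positivity predicate -/

def Pos (x : KAlg k) : Prop := ∃ s : Multiset (KG k), x = (s.map (fun g => og k g)).sum


/-! ### Basic lemmas -/

section Lemmas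
variable (k : ℕ) (hk : 3 ≤ k)

lemma gU_eq (n : ℤ) (hn1 : 1 ≤ n) (hn2 : n ≤ (k:ℤ)) :
    gU k n = FreeGroup.of (KGen.U ⟨(n - 1).toNat, by omega⟩) := by
  unfold gU
  rw [dif_pos (by omega : 0 < k)]
  congr 2
  exact Fin.ext (by simp only []; exact Nat.mod_eq_of_lt (by omega))

lemma bwin_succ (t : ℕ) : bwin k hk (t+1) =
    if t + 1 < k then og k (gU k ((k : ℤ) - (t+1)))
    else if t + 1 ≤ 2*k - 2 then
      if Even ((2*k : ℤ) - (t+1)) then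
        (Ck k hk ((2*k : ℤ) - (t+1)) +
            og k (gU k ((2*k : ℤ) - (t+1) - 1) * gE k) * bwin k hk t) *
          og k ((gU k ((2*k : ℤ) - (t+1)))⁻¹ * (gD k)⁻¹)
      else
        og k ((gE k)⁻¹ * (gU k ((2*k : ℤ) - (t+1)))⁻¹) *
          (Ck k hk ((2*k : ℤ) - (t+1)) +
            bwin k hk t * og k (gD k * gU k ((2*k : ℤ) - (t+1) - 1)))
    else 0 := rfl

lemma base_gen (m : ℤ) (h1 : 1 ≤ m) (h2 : m ≤ (k:ℤ)) :
    base k hk m = og k (gU k m) := by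
  unfold base
  rcases eq_or_lt_of_le h2 with h | h
  · have : ((k:ℤ) - m).toNat = 0 := by omega
    rw [this, bwin]
    congr 2
    omega
  · have ht : ((k:ℤ) - m).toNat = (((k:ℤ) - m).toNat - 1) + 1 := by omega
    rw [ht, bwin_succ, if_pos (by omega)]
    congr 2
    push_cast
    omega

lemma base_oddn (m : ℤ) (h1 : 2 - (k:ℤ) ≤ m) (h2 : m ≤ 0) (hpar : Odd (m + k)) :
    base k hk m = og k ((gE k)⁻¹ * (gU k (m+k))⁻¹) *
      (Ck k hk (m+k) + base k hk (m+1) * og k (gD k * gU k (m+k-1))) := by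
  unfold base
  have hkz : (3:ℤ) ≤ (k:ℤ) := by exact_mod_cast hk
  have ht : ((k:ℤ) - m).toNat = (((k:ℤ) - m).toNat - 1) + 1 := by omega
  rw [ht, bwin_succ, if_neg (by omega), if_pos (by omega)]
  have e1 : ((2*k : ℤ) - (((((k:ℤ) - m).toNat - 1) : ℕ) + 1)) = m + k := by push_cast; omega
  rw [if_neg (by rw [e1]; exact Int.not_even_iff_odd.mpr hpar)]
  rw [e1, show ((k:ℤ) - m).toNat - 1 = ((k:ℤ) - (m+1)).toNat from by omega]

lemma base_evenn (m : ℤ) (h1 : 2 - (k:ℤ) ≤ m) (h2 : m ≤ 0) (hpar : Even (m + k)) :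
    base k hk m = (Ck k hk (m+k) + og k (gU k (m+k-1) * gE k) * base k hk (m+1)) *
      og k ((gU k (m+k))⁻¹ * (gD k)⁻¹) := by
  unfold base
  have hkz : (3:ℤ) ≤ (k:ℤ) := by exact_mod_cast hk
  have ht : ((k:ℤ) - m).toNat = (((k:ℤ) - m).toNat - 1) + 1 := by omega
  rw [ht, bwin_succ, if_neg (by omega), if_pos (by omega)]
  have e1 : ((2*k : ℤ) - (((((k:ℤ) - m).toNat - 1) : ℕ) + 1)) = m + k := by push_cast; omega
  rw [if_pos (by rw [e1]; exact hpar)]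
  rw [e1, show ((k:ℤ) - m).toNat - 1 = ((k:ℤ) - (m+1)).toNat from by omega]

lemma fwd_win (i : ℕ) (h : i ≤ 2*k - 2) :
    fwd k hk i = base k hk (2 - (k:ℤ) + i) := by
  rw [fwd, if_pos h]

lemma fwd_even (i : ℕ) (h : ¬ i ≤ 2*k - 2) (he : Even ((2 : ℤ) - k + i)) :
    fwd k hk i = og k (gD k)⁻¹ *
      (Hh k hk * fwd k hk (i - (k-1)) - og k (gE k) * fwd k hk (i - (2*k-2))) := by
  rw [fwd]
  rw [if_neg h, if_pos he]

lemma fwd_odd (i : ℕ) (h : ¬ i ≤ 2*k - 2) (he : ¬ Even ((2 : ℤ) - k + i)) :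
    fwd k hk i = (fwd k hk (i - (k-1)) * Hh k hk - fwd k hk (i - (2*k-2)) * og k (gD k)) *
      og k (gE k)⁻¹ := by
  rw [fwd]
  rw [if_neg h, if_neg he]

lemma uu_fwd (n : ℤ) (h : 2 - (k:ℤ) ≤ n) : uu k hk n = fwd k hk (n + k - 2).toNat :=
  if_pos h

lemma uu_mirror (n : ℤ) (h : n < 2 - (k:ℤ)) :
    uu k hk n = phiA k (uu k hk ((k:ℤ) + 1 - n)) := by
  have hkz : (3:ℤ) ≤ (k:ℤ) := by exact_mod_cast hk
  rw [uu, if_neg (by omega), uu_fwd k hk _ (by omega)]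
  congr 2
  omega

lemma uu_win (n : ℤ) (h1 : 2 - (k:ℤ) ≤ n) (h2 : n ≤ (k:ℤ)) :
    uu k hk n = base k hk n := by
  have hkz : (3:ℤ) ≤ (k:ℤ) := by exact_mod_cast hk
  rw [uu_fwd k hk n h1, fwd_win k hk _ (by omega)]
  congr 1
  omega

lemma uu_gen (n : ℤ) (h1 : 1 ≤ n) (h2 : n ≤ (k:ℤ)) :
    uu k hk n = og k (gU k n) := by
  have hkz : (3:ℤ) ≤ (k:ℤ) := by exact_mod_cast hk
  rw [uu_win k hk n (by omega) h2, base_gen k hk n h1 h2]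


/-! ### Positivity lemmas -/

lemma pos_zero : Pos k 0 := ⟨0, by simp⟩

lemma pos_og (g : KG k) : Pos k (og k g) := ⟨{g}, by simp⟩

lemma pos_add {a b : KAlg k} (ha : Pos k a) (hb : Pos k b) : Pos k (a + b) := by
  obtain ⟨s, rfl⟩ := ha; obtain ⟨t, rfl⟩ := hb
  exact ⟨s + t, by rw [Multiset.map_add, Multiset.sum_add]⟩

lemma pos_mul {a b : KAlg k} (ha : Pos k a) (hb : Pos k b) : Pos k (a * b) := by
  obtain ⟨s, rfl⟩ := ha; obtain ⟨t, rfl⟩ := hb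
  induction s using Multiset.induction_on with
  | empty => exact ⟨0, by simp⟩
  | cons g s ih =>
    obtain ⟨w, hw⟩ := ih
    refine ⟨t.map (fun h => g * h) + w, ?_⟩
    rw [Multiset.map_cons, Multiset.sum_cons, add_mul, Multiset.map_add, Multiset.sum_add, ← hw]
    congr 1
    calc og k g * (t.map fun h => og k h).sum
        = (t.map fun h => og k g * og k h).sum := (Multiset.sum_map_mul_left).symm
      _ = ((t.map fun h => g * h).map fun h => og k h).sum := by
          rw [Multiset.map_map]
          exact congrArg Multiset.sum (Multiset.map_congr rfl (fun x _ => og_mul k g x))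

lemma pos_Ck (n : ℤ) : Pos k (Ck k hk n) := by rw [Ck_eq k hk]; exact pos_og k _

/-! ### φ lemmas -/

lemma phiG_of (x : KGen k) : phiG k (FreeGroup.of x) = FreeGroup.of (phiGen k x) :=
  FreeGroup.map.of

lemma phiA_og (g : KG k) : phiA k (og k g) = og k (phiG k g) := by
  simp only [phiA, og, MonoidAlgebra.of_apply, MonoidAlgebra.mapDomainRingHom_apply,
    AddMonoidHom.toFun_eq_coe, Finsupp.mapDomain.addMonoidHom_apply, Finsupp.mapDomain_single,
    MonoidAlgebra.mapDomain_single]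

lemma phi_gD : phiG k (gD k) = gE k := phiG_of k _
lemma phi_gE : phiG k (gE k) = gD k := phiG_of k _

lemma natmod_helper (a : ℕ) (h3 : 3 ≤ k) (h : a ≤ k - 2) :
    (k - a) % (k-1) = if a = 0 then 1 else if a = 1 then 0 else k - a := by
  rcases Nat.eq_zero_or_pos a with rfl | hpos
  · have h4 : k - 0 = (k-1) + 1 := by omega
    rw [h4, Nat.add_mod_left, if_pos rfl]
    exact Nat.mod_eq_of_lt (by omega)
  · rcases eq_or_lt_of_le (Nat.succ_le_of_lt hpos) with h1 | h2
    · rw [if_neg (by omega), if_pos (by omega)]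
      have h4 : k - a = k - 1 := by omega
      rw [h4, Nat.mod_self]
    · rw [if_neg (by omega), if_neg (by omega)]
      exact Nat.mod_eq_of_lt (by omega)

lemma phi_gU (n : ℤ) (h3 : 3 ≤ k) (h1 : 1 ≤ n) (h2 : n ≤ (k:ℤ)) :
    phiG k (gU k n) = gU k ((k:ℤ) + 1 - n) := by
  have hkz : (3:ℤ) ≤ (k:ℤ) := by exact_mod_cast h3
  unfold gU
  rw [dif_pos (by omega : 0 < k), dif_pos (by omega : 0 < k), phiG_of]
  congr 1
  simp only [phiGen]
  congr 1
  refine Fin.ext ?_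
  rw [Fin.val_rev]
  show k - ((n - 1).toNat % k + 1) = ((k:ℤ) + 1 - n - 1).toNat % k
  have e1 : (n - 1).toNat % k = (n-1).toNat := Nat.mod_eq_of_lt (by omega)
  have e2 : ((k:ℤ) + 1 - n - 1).toNat % k = ((k:ℤ) + 1 - n - 1).toNat :=
    Nat.mod_eq_of_lt (by omega)
  omega


lemma phi_Ck (n : ℤ) : phiA k (Ck k hk n) = Ck k hk (2*(k:ℤ)+1-n) := by
  have hkz : (3:ℤ) ≤ (k:ℤ) := by exact_mod_cast hk
  rw [Ck_eq k hk, Ck_eq k hk, phiA_og, phiG_of]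
  congr 2
  simp only [phiGen]
  congr 1
  refine Fin.ext ?_
  show (k - ((n-1) % ((k:ℤ)-1)).toNat) % (k-1) = ((2*(k:ℤ)+1-n-1) % ((k:ℤ)-1)).toNat
  have e0 : 2*(k:ℤ)+1-n-1 = 2*(k:ℤ)-n := by ring
  rw [e0]
  set a : ℤ := (n-1) % ((k:ℤ)-1) with ha
  set b : ℤ := (2*(k:ℤ)-n) % ((k:ℤ)-1) with hb
  have ha1 : 0 ≤ a := Int.emod_nonneg _ (by omega)
  have ha2 : a < (k:ℤ)-1 := Int.emod_lt_of_pos _ (by omega)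
  have hb1 : 0 ≤ b := Int.emod_nonneg _ (by omega)
  have hb2 : b < (k:ℤ)-1 := Int.emod_lt_of_pos _ (by omega)
  have d1 : ((k:ℤ)-1) ∣ (n-1) - a := Int.dvd_self_sub_of_emod_eq rfl
  have d2 : ((k:ℤ)-1) ∣ (2*(k:ℤ)-n) - b := Int.dvd_self_sub_of_emod_eq rfl
  have d3 : ((k:ℤ)-1) ∣ (a + b - 1) := by
    have h5 : a + b - 1 = 2*((k:ℤ)-1) - ((n-1) - a) - ((2*(k:ℤ)-n) - b) := by ring
    rw [h5]
    exact dvd_sub (dvd_sub ⟨2, by ring⟩ d1) d2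
  obtain ⟨q, hq⟩ := d3
  have hq0 : q = 0 ∨ q = 1 := by
    rcases le_or_gt q 0 with h | h
    · left
      by_contra hne
      have h6 : q ≤ -1 := by omega
      have h7 : ((k:ℤ)-1)*q ≤ ((k:ℤ)-1)*(-1) := by
        exact mul_le_mul_of_nonneg_left h6 (by omega)
      linarith
    · right
      by_contra hne
      have h6 : 2 ≤ q := by omega
      have h7 : ((k:ℤ)-1)*2 ≤ ((k:ℤ)-1)*q := by
        exact mul_le_mul_of_nonneg_left h6 (by omega)
      linarith
  rw [natmod_helper k a.toNat (by omega) (by omega)]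
  rcases hq0 with rfl | rfl
  · simp only [mul_zero] at hq
    split_ifs with h1 h2 <;> omega
  · simp only [mul_one] at hq
    split_ifs with h1 h2 <;> omega

lemma phiGen_phiGen (h3 : 3 ≤ k) (x : KGen k) : phiGen k (phiGen k x) = x := by
  cases x with
  | D => rfl
  | Dbar => rfl
  | U i => simp only [phiGen, Fin.rev_rev]
  | C i =>
    simp only [phiGen]
    congr 1
    refine Fin.ext ?_
    show (k - (k - (i:ℕ)) % (k-1)) % (k-1) = (i:ℕ)
    have hi := i.isLt
    have hin : (k - (i:ℕ)) % (k-1) = if (i:ℕ) = 0 then 1 else if (i:ℕ) = 1 then 0 else k - (i:ℕ) :=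
      natmod_helper k (i:ℕ) h3 (by omega)
    by_cases hi0 : (i:ℕ) = 0
    · rw [hin, if_pos hi0, Nat.mod_self]
      omega
    · by_cases hi1 : (i:ℕ) = 1
      · rw [hin, if_neg hi0, if_pos hi1]
        rw [show k - 0 = (k-1) + 1 from by omega, Nat.add_mod_left,
          Nat.mod_eq_of_lt (by omega)]
        omega
      · rw [hin, if_neg hi0, if_neg hi1]
        have h4 : k - (k - (i:ℕ)) = (i:ℕ) := by omega
        rw [h4, Nat.mod_eq_of_lt (by omega)]

lemma phiG_phiG (h3 : 3 ≤ k) (w : KG k) : phiG k (phiG k w) = w := by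
  have h : (phiG k).comp (phiG k) = MonoidHom.id (KG k) := by
    apply FreeGroup.ext_hom
    intro a
    simp only [MonoidHom.comp_apply, MonoidHom.id_apply, phiG_of, phiGen_phiGen k h3]
  calc phiG k (phiG k w) = ((phiG k).comp (phiG k)) w := rfl
    _ = w := by rw [h]; rfl

lemma phiA_apply (y : KAlg k) : phiA k y = MonoidAlgebra.mapDomain (phiG k) y := rfl

lemma phiA_phiA (h3 : 3 ≤ k) (x : KAlg k) : phiA k (phiA k x) = x := by
  rw [phiA_apply, phiA_apply]
  ext w
  simp [MonoidAlgebra.mapDomain, ← Finsupp.mapDomain_comp,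
    show (⇑(phiG k) ∘ ⇑(phiG k)) = id from funext fun w => phiG_phiG k h3 w, Finsupp.mapDomain_id]

lemma pos_phi {x : KAlg k} (hx : Pos k x) : Pos k (phiA k x) := by
  obtain ⟨s, rfl⟩ := hx
  refine ⟨s.map (phiG k), ?_⟩
  rw [map_multiset_sum, Multiset.map_map, Multiset.map_map]
  exact congrArg Multiset.sum (Multiset.map_congr rfl (fun x _ => phiA_og k x))


/-! ### The linear equations -/

def LinE (n : ℤ) : Prop :=
  og k (gE k) * uu k hk (n+1-(k:ℤ)) + og k (gD k) * uu k hk (n+(k:ℤ)-1) =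
    Hh k hk * uu k hk n

def LinO (n : ℤ) : Prop :=
  uu k hk (n+1-(k:ℤ)) * og k (gD k) + uu k hk (n+(k:ℤ)-1) * og k (gE k) =
    uu k hk n * Hh k hk

lemma lin1 (ko : Odd k) (n : ℤ) (hn : 1 ≤ n) :
    (Even n → LinE k hk n) ∧ (Odd n → LinO k hk n) := by
  have hkz : (3:ℤ) ≤ (k:ℤ) := by exact_mod_cast hk
  have ko' : (k:ℤ) % 2 = 1 := Int.odd_iff.mp (Int.odd_coe_nat k |>.mpr ko)
  rcases eq_or_lt_of_le hn with h1 | h1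
  · -- n = 1
    constructor
    · intro he
      exfalso; rw [Int.even_iff] at he; omega
    · intro _
      unfold LinO
      rw [← h1]
      rw [show (1:ℤ)+1-(k:ℤ) = 2 - k from by ring, show (1:ℤ)+(k:ℤ)-1 = (k:ℤ) from by ring]
      rw [uu_win k hk _ (by omega) (by omega), uu_gen k hk _ (by omega) (by omega),
        uu_gen k hk 1 (by omega) (by omega)]
      unfold Hh
      rw [← mul_assoc, og_mul_inv, one_mul, og_mul]
  · -- n ≥ 2
    have hset : uu k hk (n+(k:ℤ)-1) = fwd k hk (n + 2*k - 3).toNat := by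
      rw [uu_fwd k hk _ (by omega)]; congr 1; omega
    have e1 : fwd k hk ((n + 2*k - 3).toNat - (k-1)) = uu k hk n := by
      rw [uu_fwd k hk _ (by omega)]; congr 1; omega
    have e2 : fwd k hk ((n + 2*k - 3).toNat - (2*k-2)) = uu k hk (n+1-(k:ℤ)) := by
      rw [uu_fwd k hk _ (by omega)]; congr 1; omega
    constructor
    · intro he
      have he' : Even ((2:ℤ) - k + (((n + 2*k - 3).toNat : ℕ) : ℤ)) := by
        rw [Int.even_iff] at he ⊢; omega
      unfold LinE
      rw [hset, fwd_even k hk _ (by omega) he', e1, e2]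
      rw [← mul_assoc, og_mul_inv, one_mul]
      abel
    · intro ho
      have ho' : ¬ Even ((2:ℤ) - k + (((n + 2*k - 3).toNat : ℕ) : ℤ)) := by
        rw [Int.even_iff]; rw [Int.odd_iff] at ho; omega
      unfold LinO
      rw [hset, fwd_odd k hk _ (by omega) ho', e1, e2]
      rw [mul_assoc, og_inv_mul, mul_one]
      abel


/-! ### Quadratic relations -/

lemma og_cancel3 (A : KAlg k) (w1 w2 w3 : KG k) (h : w1 * (w2 * w3) = 1) :
    A * og k w1 * og k w2 * og k w3 = A := by
  rw [mul_assoc (A * og k w1), og_mul, mul_assoc A, og_mul, h, og_one, mul_one]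

lemma og_cancel3l (A : KAlg k) (w1 w2 w3 : KG k) (h : w1 * w2 * w3 = 1) :
    og k w1 * og k w2 * (og k w3 * A) = A := by
  rw [og_mul, ← mul_assoc, og_mul, h, og_one, one_mul]

def QuadE (n : ℤ) : Prop :=
  uu k hk (n-(k:ℤ)) * og k (gD k) * uu k hk n =
    Ck k hk n + uu k hk (n-1) * og k (gE k) * uu k hk (n+1-(k:ℤ))

def QuadO (n : ℤ) : Prop :=
  uu k hk n * og k (gE k) * uu k hk (n-(k:ℤ)) =
    Ck k hk n + uu k hk (n+1-(k:ℤ)) * og k (gD k) * uu k hk (n-1)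

lemma uu_ebase (n : ℤ) (h2 : 2 ≤ n) (hk2 : n ≤ (k:ℤ)) (he : Even n) :
    uu k hk (n-(k:ℤ)) =
      (Ck k hk n + og k (gU k (n-1) * gE k) * uu k hk (n+1-(k:ℤ))) *
        og k ((gU k n)⁻¹ * (gD k)⁻¹) := by
  have hkz : (3:ℤ) ≤ (k:ℤ) := by exact_mod_cast hk
  rw [uu_win k hk _ (by omega) (by omega),
    base_evenn k hk (n-(k:ℤ)) (by omega) (by omega)
      (by rw [show n-(k:ℤ)+(k:ℤ) = n from by ring]; exact he)]
  rw [show n-(k:ℤ)+(k:ℤ) = n from by ring, show n-(k:ℤ)+1 = n+1-(k:ℤ) from by ring]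
  rw [← uu_win k hk (n+1-(k:ℤ)) (by omega) (by omega)]

lemma uu_obase (n : ℤ) (h2 : 2 ≤ n) (hk2 : n ≤ (k:ℤ)) (ho : Odd n) :
    uu k hk (n-(k:ℤ)) =
      og k ((gE k)⁻¹ * (gU k n)⁻¹) *
        (Ck k hk n + uu k hk (n+1-(k:ℤ)) * og k (gD k * gU k (n-1))) := by
  have hkz : (3:ℤ) ≤ (k:ℤ) := by exact_mod_cast hk
  rw [uu_win k hk _ (by omega) (by omega),
    base_oddn k hk (n-(k:ℤ)) (by omega) (by omega)
      (by rw [show n-(k:ℤ)+(k:ℤ) = n from by ring]; exact ho)]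
  rw [show n-(k:ℤ)+(k:ℤ) = n from by ring, show n-(k:ℤ)+1 = n+1-(k:ℤ) from by ring]
  rw [← uu_win k hk (n+1-(k:ℤ)) (by omega) (by omega)]

lemma quad_base (n : ℤ) (h2 : 2 ≤ n) (hk2 : n ≤ (k:ℤ)) :
    (Even n → QuadE k hk n) ∧ (Odd n → QuadO k hk n) := by
  have hkz : (3:ℤ) ≤ (k:ℤ) := by exact_mod_cast hk
  constructor
  · intro he
    unfold QuadE
    rw [uu_ebase k hk n h2 hk2 he, uu_gen k hk n (by omega) (by omega),
      uu_gen k hk (n-1) (by omega) (by omega), og_mul k (gU k (n-1)) (gE k)]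
    exact og_cancel3 k _ _ _ _ (by group)
  · intro ho
    unfold QuadO
    rw [uu_obase k hk n h2 hk2 ho, uu_gen k hk n (by omega) (by omega),
      uu_gen k hk (n-1) (by omega) (by omega),
      mul_assoc (uu k hk (n+1-(k:ℤ))), og_mul k (gD k) (gU k (n-1))]
    exact og_cancel3l k _ _ _ _ (by group)

lemma quad_stepE (n : ℤ) (hq : QuadE k hk n) (hE : LinE k hk n) (hO : LinO k hk (n-1)) :
    QuadE k hk (n+(k:ℤ)-1) := by
  have hkz : (3:ℤ) ≤ (k:ℤ) := by exact_mod_cast hk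
  unfold QuadE at hq ⊢
  unfold LinE at hE
  unfold LinO at hO
  rw [show n-1+1-(k:ℤ) = n-(k:ℤ) from by ring, show n-1+(k:ℤ)-1 = n+(k:ℤ)-2 from by ring] at hO
  rw [show n+(k:ℤ)-1-(k:ℤ) = n-1 from by ring, show n+(k:ℤ)-1-1 = n+(k:ℤ)-2 from by ring,
    show n+(k:ℤ)-1+1-(k:ℤ) = n from by ring]
  rw [ck_congr k hk (show ((k:ℤ)-1) ∣ (n+(k:ℤ)-1) - n from ⟨1, by ring⟩)]
  have hA : og k (gD k) * uu k hk (n+(k:ℤ)-1) =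
      Hh k hk * uu k hk n - og k (gE k) * uu k hk (n+1-(k:ℤ)) := by rw [← hE]; abel
  have hB : uu k hk (n+(k:ℤ)-2) * og k (gE k) =
      uu k hk (n-1) * Hh k hk - uu k hk (n-(k:ℤ)) * og k (gD k) := by rw [← hO]; abel
  have hq' : uu k hk (n-1) * og k (gE k) * uu k hk (n+1-(k:ℤ)) =
      uu k hk (n-(k:ℤ)) * og k (gD k) * uu k hk n - Ck k hk n := by rw [hq]; abel
  calc uu k hk (n-1) * og k (gD k) * uu k hk (n+(k:ℤ)-1)
      = uu k hk (n-1) * (og k (gD k) * uu k hk (n+(k:ℤ)-1)) := mul_assoc _ _ _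
    _ = uu k hk (n-1) * (Hh k hk * uu k hk n) -
        uu k hk (n-1) * (og k (gE k) * uu k hk (n+1-(k:ℤ))) := by rw [hA, mul_sub]
    _ = uu k hk (n-1) * Hh k hk * uu k hk n -
        (uu k hk (n-(k:ℤ)) * og k (gD k) * uu k hk n - Ck k hk n) := by
          rw [← mul_assoc, ← mul_assoc, hq']
    _ = Ck k hk n + (uu k hk (n-1) * Hh k hk - uu k hk (n-(k:ℤ)) * og k (gD k)) *
        uu k hk n := by rw [sub_mul]; abel
    _ = Ck k hk n + uu k hk (n+(k:ℤ)-2) * og k (gE k) * uu k hk n := by rw [← hB]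

lemma quad_stepO (n : ℤ) (hq : QuadO k hk n) (hO : LinO k hk n) (hE : LinE k hk (n-1)) :
    QuadO k hk (n+(k:ℤ)-1) := by
  have hkz : (3:ℤ) ≤ (k:ℤ) := by exact_mod_cast hk
  unfold QuadO at hq ⊢
  unfold LinO at hO
  unfold LinE at hE
  rw [show n-1+1-(k:ℤ) = n-(k:ℤ) from by ring, show n-1+(k:ℤ)-1 = n+(k:ℤ)-2 from by ring] at hE
  rw [show n+(k:ℤ)-1-(k:ℤ) = n-1 from by ring, show n+(k:ℤ)-1-1 = n+(k:ℤ)-2 from by ring,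
    show n+(k:ℤ)-1+1-(k:ℤ) = n from by ring]
  rw [ck_congr k hk (show ((k:ℤ)-1) ∣ (n+(k:ℤ)-1) - n from ⟨1, by ring⟩)]
  have hA : uu k hk (n+(k:ℤ)-1) * og k (gE k) =
      uu k hk n * Hh k hk - uu k hk (n+1-(k:ℤ)) * og k (gD k) := by rw [← hO]; abel
  have hB : og k (gD k) * uu k hk (n+(k:ℤ)-2) =
      Hh k hk * uu k hk (n-1) - og k (gE k) * uu k hk (n-(k:ℤ)) := by rw [← hE]; abel
  have hq' : uu k hk n * (og k (gE k) * uu k hk (n-(k:ℤ))) =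
      Ck k hk n + uu k hk (n+1-(k:ℤ)) * og k (gD k) * uu k hk (n-1) := by
    rw [← mul_assoc]; exact hq
  calc uu k hk (n+(k:ℤ)-1) * og k (gE k) * uu k hk (n-1)
      = (uu k hk n * Hh k hk - uu k hk (n+1-(k:ℤ)) * og k (gD k)) * uu k hk (n-1) := by
          rw [hA]
    _ = uu k hk n * (Hh k hk * uu k hk (n-1)) -
        uu k hk (n+1-(k:ℤ)) * og k (gD k) * uu k hk (n-1) := by
          rw [sub_mul, mul_assoc]
    _ = uu k hk n * (og k (gD k) * uu k hk (n+(k:ℤ)-2)) +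
        uu k hk n * (og k (gE k) * uu k hk (n-(k:ℤ))) -
        uu k hk (n+1-(k:ℤ)) * og k (gD k) * uu k hk (n-1) := by
          rw [show Hh k hk * uu k hk (n-1) =
            og k (gD k) * uu k hk (n+(k:ℤ)-2) + og k (gE k) * uu k hk (n-(k:ℤ)) from by
              rw [hB]; abel, mul_add]
    _ = Ck k hk n + uu k hk n * og k (gD k) * uu k hk (n+(k:ℤ)-2) := by
          rw [hq', ← mul_assoc]; abel

def Quad (n : ℤ) : Prop := (Even n → QuadE k hk n) ∧ (Odd n → QuadO k hk n)

lemma quad_ge2 (ko : Odd k) : ∀ n : ℤ, 2 ≤ n → Quad k hk n := by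
  have hkz : (3:ℤ) ≤ (k:ℤ) := by exact_mod_cast hk
  have ko' : (k:ℤ) % 2 = 1 := Int.odd_iff.mp (Int.odd_coe_nat k |>.mpr ko)
  have main : ∀ i : ℕ, ∀ n : ℤ, 2 ≤ n → (n - 2).toNat = i → Quad k hk n := by
    intro i
    induction i using Nat.strong_induction_on with
    | _ i ih =>
      intro n hn hni
      by_cases hle : n ≤ (k:ℤ)
      · exact quad_base k hk n hn hle
      · have h2 : 2 ≤ n - ((k:ℤ)-1) := by omega
        have hq := ih ((n - ((k:ℤ)-1)) - 2).toNat (by omega) _ h2 rfl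
        have heq : n - ((k:ℤ)-1) + ((k:ℤ)-1) = n := by ring
        constructor
        · intro he
          have he0 : Even (n - ((k:ℤ)-1)) := by
            rw [Int.even_iff] at he ⊢; omega
          have := quad_stepE k hk (n - ((k:ℤ)-1)) (hq.1 he0)
            ((lin1 k hk ko _ (by omega)).1 he0)
            ((lin1 k hk ko _ (by omega)).2 (by rw [Int.odd_iff]; rw [Int.even_iff] at he0; omega))
          rw [show n - ((k:ℤ)-1) + (k:ℤ) - 1 = n from by ring] at this
          exact this
        · intro ho
          have ho0 : Odd (n - ((k:ℤ)-1)) := by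
            rw [Int.odd_iff] at ho ⊢; omega
          have := quad_stepO k hk (n - ((k:ℤ)-1)) (hq.2 ho0)
            ((lin1 k hk ko _ (by omega)).2 ho0)
            ((lin1 k hk ko _ (by omega)).1 (by rw [Int.even_iff]; rw [Int.odd_iff] at ho0; omega))
          rw [show n - ((k:ℤ)-1) + (k:ℤ) - 1 = n from by ring] at this
          exact this
  exact fun n hn => main (n-2).toNat n hn rfl


/-! ### Solved forms and positivity on the extended window -/

lemma og_solve_l (w : KG k) (X Y : KAlg k) (h : og k w * X = Y) : X = og k w⁻¹ * Y := by
  rw [← h, ← mul_assoc, og_mul, inv_mul_cancel, og_one, one_mul]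

lemma og_solve_r (w : KG k) (X Y : KAlg k) (h : X * og k w = Y) : X = Y * og k w⁻¹ := by
  rw [← h, mul_assoc, og_mul, mul_inv_cancel, og_one, mul_one]

lemma ulin_e (ko : Odd k) (n : ℤ) (h1 : (k:ℤ)+1 ≤ n) (h2 : n ≤ 2*(k:ℤ)) (he : Even n) :
    uu k hk n = og k ((gU k (n-(k:ℤ)) * gD k)⁻¹) *
      (Ck k hk n + uu k hk (n-1) * og k (gE k) * uu k hk (n+1-(k:ℤ))) := by
  have hkz : (3:ℤ) ≤ (k:ℤ) := by exact_mod_cast hk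
  have hq := (quad_ge2 k hk ko n (by omega)).1 he
  unfold QuadE at hq
  rw [uu_gen k hk (n-(k:ℤ)) (by omega) (by omega),
    og_mul k (gU k (n-(k:ℤ))) (gD k)] at hq
  exact og_solve_l k _ _ _ hq

lemma ulin_o (ko : Odd k) (n : ℤ) (h1 : (k:ℤ)+1 ≤ n) (h2 : n ≤ 2*(k:ℤ)) (ho : Odd n) :
    uu k hk n = (Ck k hk n + uu k hk (n+1-(k:ℤ)) * og k (gD k) * uu k hk (n-1)) *
      og k ((gE k * gU k (n-(k:ℤ)))⁻¹) := by
  have hkz : (3:ℤ) ≤ (k:ℤ) := by exact_mod_cast hk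
  have hq := (quad_ge2 k hk ko n (by omega)).2 ho
  unfold QuadO at hq
  rw [uu_gen k hk (n-(k:ℤ)) (by omega) (by omega), mul_assoc,
    og_mul k (gE k) (gU k (n-(k:ℤ)))] at hq
  exact og_solve_r k _ _ _ hq

lemma bwin_pos : ∀ t, Pos k (bwin k hk t) := by
  intro t
  induction t using Nat.strong_induction_on with
  | _ t ih =>
    match t with
    | 0 => exact pos_og k _
    | (t+1) =>
      rw [bwin_succ]
      split_ifs with h1 h2 h3
      · exact pos_og k _
      · exact pos_mul k (pos_add k (pos_Ck k hk _)
          (pos_mul k (pos_og k _) (ih t (by omega)))) (pos_og k _)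
      · exact pos_mul k (pos_og k _) (pos_add k (pos_Ck k hk _)
          (pos_mul k (ih t (by omega)) (pos_og k _)))
      · exact pos_zero k

lemma pos_win (m : ℤ) (h1 : 2 - (k:ℤ) ≤ m) (h2 : m ≤ (k:ℤ)) : Pos k (uu k hk m) := by
  rw [uu_win k hk m h1 h2]
  exact bwin_pos k hk _

lemma pos2k (ko : Odd k) : ∀ n : ℤ, (k:ℤ)+1 ≤ n → n ≤ 2*(k:ℤ) → Pos k (uu k hk n) := by
  have hkz : (3:ℤ) ≤ (k:ℤ) := by exact_mod_cast hk
  have ko' : (k:ℤ) % 2 = 1 := Int.odd_iff.mp (Int.odd_coe_nat k |>.mpr ko)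
  have main : ∀ i : ℕ, ∀ n : ℤ, (k:ℤ)+1 ≤ n → n ≤ 2*(k:ℤ) →
      (n - ((k:ℤ)+1)).toNat = i → Pos k (uu k hk n) := by
    intro i
    induction i using Nat.strong_induction_on with
    | _ i ih =>
      intro n h1 h2 hni
      have hprev : Pos k (uu k hk (n-1)) := by
        rcases eq_or_lt_of_le h1 with hh | hh
        · rw [show n-1 = (k:ℤ) from by omega]
          exact pos_win k hk _ (by omega) (by omega)
        · exact ih (n-1-((k:ℤ)+1)).toNat (by omega) (n-1) (by omega) (by omega) rfl
      have hprev2 : Pos k (uu k hk (n+1-(k:ℤ))) := by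
        rcases le_or_gt (n+1-(k:ℤ)) (k:ℤ) with hh | hh
        · exact pos_win k hk _ (by omega) hh
        · exact ih (n+1-(k:ℤ)-((k:ℤ)+1)).toNat (by omega) _ (by omega) (by omega) rfl
      rcases Int.even_or_odd n with he | ho
      · rw [ulin_e k hk ko n h1 h2 he]
        exact pos_mul k (pos_og k _) (pos_add k (pos_Ck k hk _)
          (pos_mul k (pos_mul k hprev (pos_og k _)) hprev2))
      · rw [ulin_o k hk ko n h1 h2 ho]
        exact pos_mul k (pos_add k (pos_Ck k hk _)
          (pos_mul k (pos_mul k hprev2 (pos_og k _)) hprev)) (pos_og k _)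
  exact fun n h1 h2 => main (n - ((k:ℤ)+1)).toNat n h1 h2 rfl


/-! ### φ-symmetry of the sequence -/

lemma psym_win (ko : Odd k) : ∀ m : ℤ, 0 ≤ m → m ≤ (k:ℤ)-1 →
    phiA k (uu k hk ((k:ℤ)+m)) = uu k hk (1-m) := by
  have hkz : (3:ℤ) ≤ (k:ℤ) := by exact_mod_cast hk
  have ko' : (k:ℤ) % 2 = 1 := Int.odd_iff.mp (Int.odd_coe_nat k |>.mpr ko)
  have main : ∀ i : ℕ, ∀ m : ℤ, 0 ≤ m → m ≤ (k:ℤ)-1 → m.toNat = i →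
      phiA k (uu k hk ((k:ℤ)+m)) = uu k hk (1-m) := by
    intro i
    induction i using Nat.strong_induction_on with
    | _ i ih =>
      intro m h0 h1 hmi
      rcases eq_or_lt_of_le h0 with h00 | h00
      · rw [← h00, add_zero, sub_zero]
        rw [uu_gen k hk (k:ℤ) (by omega) (by omega), uu_gen k hk 1 (by omega) (by omega),
          phiA_og, phi_gU k (k:ℤ) hk (by omega) (by omega),
          show (k:ℤ)+1-(k:ℤ) = 1 from by ring]
      · have ihm := ih (m-1).toNat (by omega) (m-1) (by omega) (by omega) rfl
        rcases Int.even_or_odd ((k:ℤ)+m) with he | ho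
        · -- k+m even, m odd
          rw [ulin_e k hk ko ((k:ℤ)+m) (by omega) (by omega) he]
          rw [uu_gen k hk ((k:ℤ)+m+1-(k:ℤ)) (by omega) (by omega),
            show (k:ℤ)+m-1 = (k:ℤ)+(m-1) from by ring]
          simp only [map_mul, map_add]
          rw [phiA_og, phiA_og, phiA_og, ihm, phi_Ck]
          rw [map_inv, map_mul, phi_gU k ((k:ℤ)+m-(k:ℤ)) hk (by omega) (by omega),
            phi_gE, phi_gU k ((k:ℤ)+m+1-(k:ℤ)) hk (by omega) (by omega),
            phi_gD]
          rw [show (k:ℤ)+1-((k:ℤ)+m-(k:ℤ)) = 1-m+(k:ℤ) from by ring,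
            show 2*(k:ℤ)+1-((k:ℤ)+m) = 1-m+(k:ℤ) from by ring,
            show (k:ℤ)+1-((k:ℤ)+m+1-(k:ℤ)) = 1-m+(k:ℤ)-1 from by ring,
            show (1:ℤ)-(m-1) = 1-m+1 from by ring]
          rw [uu_win k hk (1-m) (by omega) (by omega),
            base_oddn k hk (1-m) (by omega) (by omega)
              (by rcases he with ⟨r, hr⟩
                  exact ⟨r - m, by omega⟩),
            ← uu_win k hk (1-m+1) (by omega) (by omega)]
          rw [mul_inv_rev, mul_assoc (uu k hk (1-m+1)), og_mul]
        · -- k+m odd, m even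
          rw [ulin_o k hk ko ((k:ℤ)+m) (by omega) (by omega) ho]
          rw [uu_gen k hk ((k:ℤ)+m+1-(k:ℤ)) (by omega) (by omega),
            show (k:ℤ)+m-1 = (k:ℤ)+(m-1) from by ring]
          simp only [map_mul, map_add]
          rw [phiA_og, phiA_og, phiA_og, ihm, phi_Ck]
          rw [map_inv, map_mul, phi_gE,
            phi_gU k ((k:ℤ)+m-(k:ℤ)) hk (by omega) (by omega),
            phi_gU k ((k:ℤ)+m+1-(k:ℤ)) hk (by omega) (by omega),
            phi_gD]
          rw [show (k:ℤ)+1-((k:ℤ)+m-(k:ℤ)) = 1-m+(k:ℤ) from by ring,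
            show 2*(k:ℤ)+1-((k:ℤ)+m) = 1-m+(k:ℤ) from by ring,
            show (k:ℤ)+1-((k:ℤ)+m+1-(k:ℤ)) = 1-m+(k:ℤ)-1 from by ring,
            show (1:ℤ)-(m-1) = 1-m+1 from by ring]
          rw [uu_win k hk (1-m) (by omega) (by omega),
            base_evenn k hk (1-m) (by omega) (by omega)
              (by rcases ho with ⟨r, hr⟩
                  exact ⟨r + 1 - m, by omega⟩),
            ← uu_win k hk (1-m+1) (by omega) (by omega)]
          rw [mul_inv_rev, og_mul k (gU k (1-m+(k:ℤ)-1)) (gE k)]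
  exact fun m h0 h1 => main m.toNat m h0 h1 rfl


lemma psym (ko : Odd k) (n : ℤ) : phiA k (uu k hk n) = uu k hk ((k:ℤ)+1-n) := by
  have hkz : (3:ℤ) ≤ (k:ℤ) := by exact_mod_cast hk
  rcases le_or_gt n 0 with h | h
  · rcases le_or_gt (2-(k:ℤ)) n with h2 | h2
    · have hw := psym_win k hk ko (1-n) (by omega) (by omega)
      rw [show (k:ℤ)+(1-n) = (k:ℤ)+1-n from by ring,
        show (1:ℤ)-(1-n) = n from by ring] at hw
      rw [← hw, phiA_phiA k hk]
    · rw [uu_mirror k hk n (by omega), phiA_phiA k hk]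
  · rcases le_or_gt n (k:ℤ) with h2 | h2
    · rw [uu_gen k hk n h h2, uu_gen k hk ((k:ℤ)+1-n) (by omega) (by omega), phiA_og,
        phi_gU k n hk h h2]
    · rcases le_or_gt n (2*(k:ℤ)-1) with h3 | h3
      · have hw := psym_win k hk ko (n-(k:ℤ)) (by omega) (by omega)
        rw [show (k:ℤ)+(n-(k:ℤ)) = n from by ring,
          show (1:ℤ)-(n-(k:ℤ)) = (k:ℤ)+1-n from by ring] at hw
        exact hw
      · rw [uu_mirror k hk ((k:ℤ)+1-n) (by omega),
          show (k:ℤ)+1-((k:ℤ)+1-n) = n from by ring]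

lemma phiH (ko : Odd k) : phiA k (Hh k hk) = Hh k hk := by
  have hkz : (3:ℤ) ≤ (k:ℤ) := by exact_mod_cast hk
  have hlin := (lin1 k hk ko (k:ℤ) (by omega)).2 (Int.odd_coe_nat k |>.mpr ko)
  unfold LinO at hlin
  rw [show (k:ℤ)+1-(k:ℤ) = 1 from by ring, show (k:ℤ)+(k:ℤ)-1 = 2*(k:ℤ)-1 from by ring,
    uu_gen k hk 1 (by omega) (by omega), uu_gen k hk (k:ℤ) (by omega) (by omega)] at hlin
  have h2 : uu k hk (2*(k:ℤ)-1) * og k (gE k) =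
      og k (gU k (k:ℤ)) * Hh k hk - og k (gU k 1) * og k (gD k) := by
    rw [← hlin]; abel
  have hdef : Hh k hk = og k ((gU k 1)⁻¹) *
      (base k hk (2 - (k:ℤ)) * og k (gD k) + og k (gU k (k:ℤ) * gE k)) := rfl
  conv_lhs => rw [hdef]
  rw [show base k hk (2-(k:ℤ)) = uu k hk (2-(k:ℤ)) from
    (uu_win k hk _ (by omega) (by omega)).symm]
  simp only [map_mul, map_add, phiA_og, map_inv]
  rw [psym k hk ko (2-(k:ℤ)), show (k:ℤ)+1-(2-(k:ℤ)) = 2*(k:ℤ)-1 from by ring]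
  rw [phi_gU k 1 hk (by omega) (by omega), show (k:ℤ)+1-1 = (k:ℤ) from by ring]
  rw [phi_gU k (k:ℤ) hk (by omega) (by omega), show (k:ℤ)+1-(k:ℤ) = 1 from by ring]
  rw [phi_gE, phi_gD]
  rw [h2, sub_add_cancel]
  rw [← mul_assoc, og_mul, inv_mul_cancel, og_one, one_mul]

lemma linfull (ko : Odd k) (n : ℤ) :
    (Even n → LinE k hk n) ∧ (Odd n → LinO k hk n) := by
  have hkz : (3:ℤ) ≤ (k:ℤ) := by exact_mod_cast hk
  have ko' : (k:ℤ) % 2 = 1 := Int.odd_iff.mp (Int.odd_coe_nat k |>.mpr ko)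
  rcases le_or_gt 1 n with h | h
  · exact lin1 k hk ko n h
  · constructor
    · intro he
      have he' : Even ((k:ℤ)+1-n) := by
        rw [Int.even_iff] at he ⊢; omega
      have hl := (lin1 k hk ko ((k:ℤ)+1-n) (by omega)).1 he'
      unfold LinE at hl ⊢
      rw [show (k:ℤ)+1-n+1-(k:ℤ) = 2-n from by ring,
        show (k:ℤ)+1-n+(k:ℤ)-1 = 2*(k:ℤ)-n from by ring] at hl
      have := congrArg (phiA k) hl
      simp only [map_mul, map_add] at this
      rw [phiA_og, phiA_og, phi_gE, phi_gD, phiH k hk ko,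
        psym k hk ko (2-n), psym k hk ko (2*(k:ℤ)-n), psym k hk ko ((k:ℤ)+1-n)] at this
      rw [show (k:ℤ)+1-(2-n) = n+(k:ℤ)-1 from by ring,
        show (k:ℤ)+1-(2*(k:ℤ)-n) = n+1-(k:ℤ) from by ring,
        show (k:ℤ)+1-((k:ℤ)+1-n) = n from by ring] at this
      rw [← this]; abel
    · intro ho
      have ho' : Odd ((k:ℤ)+1-n) := by
        rw [Int.odd_iff] at ho ⊢; omega
      have hl := (lin1 k hk ko ((k:ℤ)+1-n) (by omega)).2 ho'
      unfold LinO at hl ⊢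
      rw [show (k:ℤ)+1-n+1-(k:ℤ) = 2-n from by ring,
        show (k:ℤ)+1-n+(k:ℤ)-1 = 2*(k:ℤ)-n from by ring] at hl
      have := congrArg (phiA k) hl
      simp only [map_mul, map_add] at this
      rw [phiA_og, phiA_og, phi_gE, phi_gD, phiH k hk ko,
        psym k hk ko (2-n), psym k hk ko (2*(k:ℤ)-n), psym k hk ko ((k:ℤ)+1-n)] at this
      rw [show (k:ℤ)+1-(2-n) = n+(k:ℤ)-1 from by ring,
        show (k:ℤ)+1-(2*(k:ℤ)-n) = n+1-(k:ℤ) from by ring,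
        show (k:ℤ)+1-((k:ℤ)+1-n) = n from by ring] at this
      rw [← this]; abel

lemma quadfull (ko : Odd k) (n : ℤ) :
    (Even n → QuadE k hk n) ∧ (Odd n → QuadO k hk n) := by
  have hkz : (3:ℤ) ≤ (k:ℤ) := by exact_mod_cast hk
  have ko' : (k:ℤ) % 2 = 1 := Int.odd_iff.mp (Int.odd_coe_nat k |>.mpr ko)
  rcases le_or_gt 2 n with h | h
  · exact quad_ge2 k hk ko n h
  · constructor
    · intro he
      have ho' : Odd (2*(k:ℤ)+1-n) := by
        rw [Int.even_iff] at he; rw [Int.odd_iff]; omega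
      have hq := (quad_ge2 k hk ko (2*(k:ℤ)+1-n) (by omega)).2 ho'
      unfold QuadO at hq
      unfold QuadE
      rw [show 2*(k:ℤ)+1-n-(k:ℤ) = (k:ℤ)+1-n from by ring,
        show 2*(k:ℤ)+1-n+1-(k:ℤ) = (k:ℤ)+2-n from by ring,
        show 2*(k:ℤ)+1-n-1 = 2*(k:ℤ)-n from by ring] at hq
      have := congrArg (phiA k) hq
      simp only [map_mul, map_add] at this
      rw [phiA_og, phiA_og, phi_gE, phi_gD, phi_Ck,
        psym k hk ko ((k:ℤ)+1-n), psym k hk ko (2*(k:ℤ)+1-n),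
        psym k hk ko ((k:ℤ)+2-n), psym k hk ko (2*(k:ℤ)-n)] at this
      rw [show (k:ℤ)+1-((k:ℤ)+1-n) = n from by ring,
        show (k:ℤ)+1-(2*(k:ℤ)+1-n) = n-(k:ℤ) from by ring,
        show (k:ℤ)+1-((k:ℤ)+2-n) = n-1 from by ring,
        show (k:ℤ)+1-(2*(k:ℤ)-n) = n+1-(k:ℤ) from by ring,
        show 2*(k:ℤ)+1-(2*(k:ℤ)+1-n) = n from by ring] at this
      exact this
    · intro ho
      have he' : Even (2*(k:ℤ)+1-n) := by
        rw [Int.odd_iff] at ho; rw [Int.even_iff]; omega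
      have hq := (quad_ge2 k hk ko (2*(k:ℤ)+1-n) (by omega)).1 he'
      unfold QuadE at hq
      unfold QuadO
      rw [show 2*(k:ℤ)+1-n-(k:ℤ) = (k:ℤ)+1-n from by ring,
        show 2*(k:ℤ)+1-n+1-(k:ℤ) = (k:ℤ)+2-n from by ring,
        show 2*(k:ℤ)+1-n-1 = 2*(k:ℤ)-n from by ring] at hq
      have := congrArg (phiA k) hq
      simp only [map_mul, map_add] at this
      rw [phiA_og, phiA_og, phi_gE, phi_gD, phi_Ck,
        psym k hk ko ((k:ℤ)+1-n), psym k hk ko (2*(k:ℤ)+1-n),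
        psym k hk ko ((k:ℤ)+2-n), psym k hk ko (2*(k:ℤ)-n)] at this
      rw [show (k:ℤ)+1-((k:ℤ)+1-n) = n from by ring,
        show (k:ℤ)+1-(2*(k:ℤ)+1-n) = n-(k:ℤ) from by ring,
        show (k:ℤ)+1-((k:ℤ)+2-n) = n-1 from by ring,
        show (k:ℤ)+1-(2*(k:ℤ)-n) = n+1-(k:ℤ) from by ring,
        show 2*(k:ℤ)+1-(2*(k:ℤ)+1-n) = n from by ring] at this
      exact this


/-! ### Special leading terms -/

lemma uu_bwd_o (m : ℤ) (h1 : 2-(k:ℤ) ≤ m) (h2 : m ≤ 0) (hpar : Odd (m+(k:ℤ))) :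
    uu k hk m = og k ((gE k)⁻¹ * (gU k (m+(k:ℤ)))⁻¹) *
      (Ck k hk (m+(k:ℤ)) + uu k hk (m+1) * og k (gD k * gU k (m+(k:ℤ)-1))) := by
  have hkz : (3:ℤ) ≤ (k:ℤ) := by exact_mod_cast hk
  rw [uu_win k hk m (by omega) (by omega), base_oddn k hk m h1 h2 hpar,
    ← uu_win k hk (m+1) (by omega) (by omega)]

lemma uu_bwd_e (m : ℤ) (h1 : 2-(k:ℤ) ≤ m) (h2 : m ≤ 0) (hpar : Even (m+(k:ℤ))) :
    uu k hk m = (Ck k hk (m+(k:ℤ)) + og k (gU k (m+(k:ℤ)-1) * gE k) * uu k hk (m+1)) *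
      og k ((gU k (m+(k:ℤ)))⁻¹ * (gD k)⁻¹) := by
  have hkz : (3:ℤ) ≤ (k:ℤ) := by exact_mod_cast hk
  rw [uu_win k hk m (by omega) (by omega), base_evenn k hk m h1 h2 hpar,
    ← uu_win k hk (m+1) (by omega) (by omega)]

lemma Fspec (ko : Odd k) : ∀ m : ℤ, (k:ℤ) ≤ m → m ≤ 2*(k:ℤ)-1 →
    (Odd m → ∃ r, Pos k r ∧ uu k hk m =
      og k (gU k (m+1-(k:ℤ)) * (gU k 1)⁻¹ * gU k (k:ℤ)) + r) ∧
    (Even m → ∃ r, Pos k r ∧ uu k hk m =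
      og k ((gD k)⁻¹ * (gU k 1)⁻¹ * gU k (k:ℤ) * gE k * gU k (m+1-(k:ℤ))) + r) := by
  have hkz : (3:ℤ) ≤ (k:ℤ) := by exact_mod_cast hk
  have ko' : (k:ℤ) % 2 = 1 := Int.odd_iff.mp (Int.odd_coe_nat k |>.mpr ko)
  have main : ∀ i : ℕ, ∀ m : ℤ, (k:ℤ) ≤ m → m ≤ 2*(k:ℤ)-1 → (m-(k:ℤ)).toNat = i →
      (Odd m → ∃ r, Pos k r ∧ uu k hk m =
        og k (gU k (m+1-(k:ℤ)) * (gU k 1)⁻¹ * gU k (k:ℤ)) + r) ∧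
      (Even m → ∃ r, Pos k r ∧ uu k hk m =
        og k ((gD k)⁻¹ * (gU k 1)⁻¹ * gU k (k:ℤ) * gE k * gU k (m+1-(k:ℤ))) + r) := by
    intro i
    induction i using Nat.strong_induction_on with
    | _ i ih =>
      intro m h1 h2 hmi
      rcases eq_or_lt_of_le h1 with h00 | h00
      · constructor
        · intro _
          refine ⟨0, pos_zero k, ?_⟩
          rw [← h00, uu_gen k hk (k:ℤ) (by omega) (by omega), add_zero,
            show (k:ℤ)+1-(k:ℤ) = 1 from by ring]
          congr 1
          group
        · intro hev
          exfalso
          rw [← h00, Int.even_iff] at hev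
          omega
      · have ihm := ih (m-1-(k:ℤ)).toNat (by omega) (m-1) (by omega) (by omega) rfl
        constructor
        · intro hodd
          obtain ⟨r, hr, heq⟩ := ihm.2 (by rw [Int.even_iff]; rw [Int.odd_iff] at hodd; omega)
          rw [show m-1+1-(k:ℤ) = m-(k:ℤ) from by ring] at heq
          refine ⟨Ck k hk m * og k ((gE k * gU k (m-(k:ℤ)))⁻¹) +
            og k (gU k (m+1-(k:ℤ)) * gD k) * r * og k ((gE k * gU k (m-(k:ℤ)))⁻¹),
            pos_add k (pos_mul k (pos_Ck k hk m) (pos_og k _))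
              (pos_mul k (pos_mul k (pos_og k _) hr) (pos_og k _)), ?_⟩
          rw [ulin_o k hk ko m (by omega) (by omega) hodd, heq,
            uu_gen k hk (m+1-(k:ℤ)) (by omega) (by omega)]
          have hc : og k (gU k (m+1-(k:ℤ)) * (gU k 1)⁻¹ * gU k (k:ℤ)) =
              og k (gU k (m+1-(k:ℤ))) * og k (gD k) *
              og k ((gD k)⁻¹ * (gU k 1)⁻¹ * gU k (k:ℤ) * gE k * gU k (m-(k:ℤ))) *
              og k ((gE k * gU k (m-(k:ℤ)))⁻¹) := by
            rw [og_mul, og_mul, og_mul]; congr 1; group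
          have hc2 : og k (gU k (m+1-(k:ℤ)) * gD k) =
              og k (gU k (m+1-(k:ℤ))) * og k (gD k) := (og_mul k _ _).symm
          rw [hc, hc2]
          noncomm_ring
        · intro heven
          obtain ⟨r, hr, heq⟩ := ihm.1 (by rw [Int.odd_iff]; rw [Int.even_iff] at heven; omega)
          rw [show m-1+1-(k:ℤ) = m-(k:ℤ) from by ring] at heq
          refine ⟨og k ((gU k (m-(k:ℤ)) * gD k)⁻¹) * Ck k hk m +
            og k ((gU k (m-(k:ℤ)) * gD k)⁻¹) * r * og k (gE k) * og k (gU k (m+1-(k:ℤ))),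
            pos_add k (pos_mul k (pos_og k _) (pos_Ck k hk m))
              (pos_mul k (pos_mul k (pos_mul k (pos_og k _) hr) (pos_og k _)) (pos_og k _)), ?_⟩
          rw [ulin_e k hk ko m (by omega) (by omega) heven, heq,
            uu_gen k hk (m+1-(k:ℤ)) (by omega) (by omega)]
          have hc : og k ((gD k)⁻¹ * (gU k 1)⁻¹ * gU k (k:ℤ) * gE k * gU k (m+1-(k:ℤ))) =
              og k ((gU k (m-(k:ℤ)) * gD k)⁻¹) *
              og k (gU k (m-(k:ℤ)) * (gU k 1)⁻¹ * gU k (k:ℤ)) * og k (gE k) *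
              og k (gU k (m+1-(k:ℤ))) := by
            rw [og_mul, og_mul, og_mul]; congr 1; group
          rw [hc]
          noncomm_ring
  exact fun m h1 h2 => main (m-(k:ℤ)).toNat m h1 h2 rfl

lemma Gspec (ko : Odd k) : ∀ m : ℤ, 2-(k:ℤ) ≤ m → m ≤ 1 →
    (Odd m → ∃ r, Pos k r ∧ uu k hk m =
      og k (gU k (m+(k:ℤ)-1) * (gU k (k:ℤ))⁻¹ * gU k 1) + r) ∧
    (Even m → ∃ r, Pos k r ∧ uu k hk m =
      og k ((gE k)⁻¹ * (gU k (k:ℤ))⁻¹ * gU k 1 * gD k * gU k (m+(k:ℤ)-1)) + r) := by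
  have hkz : (3:ℤ) ≤ (k:ℤ) := by exact_mod_cast hk
  have ko' : (k:ℤ) % 2 = 1 := Int.odd_iff.mp (Int.odd_coe_nat k |>.mpr ko)
  have main : ∀ i : ℕ, ∀ m : ℤ, 2-(k:ℤ) ≤ m → m ≤ 1 → (1-m).toNat = i →
      (Odd m → ∃ r, Pos k r ∧ uu k hk m =
        og k (gU k (m+(k:ℤ)-1) * (gU k (k:ℤ))⁻¹ * gU k 1) + r) ∧
      (Even m → ∃ r, Pos k r ∧ uu k hk m =
        og k ((gE k)⁻¹ * (gU k (k:ℤ))⁻¹ * gU k 1 * gD k * gU k (m+(k:ℤ)-1)) + r) := by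
    intro i
    induction i using Nat.strong_induction_on with
    | _ i ih =>
      intro m h1 h2 hmi
      rcases eq_or_lt_of_le h2 with h00 | h00
      · constructor
        · intro _
          refine ⟨0, pos_zero k, ?_⟩
          rw [h00, uu_gen k hk 1 (by omega) (by omega), add_zero,
            show (1:ℤ)+(k:ℤ)-1 = (k:ℤ) from by ring]
          congr 1
          group
        · intro hev
          exfalso
          rw [h00, Int.even_iff] at hev
          omega
      · have ihm := ih (1-(m+1)).toNat (by omega) (m+1) (by omega) (by omega) rfl
        constructor
        · intro hodd
          obtain ⟨r, hr, heq⟩ := ihm.2 (by rw [Int.even_iff]; rw [Int.odd_iff] at hodd; omega)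
          rw [show m+1+(k:ℤ)-1 = m+(k:ℤ) from by ring] at heq
          refine ⟨Ck k hk (m+(k:ℤ)) * og k ((gU k (m+(k:ℤ)))⁻¹ * (gD k)⁻¹) +
            og k (gU k (m+(k:ℤ)-1) * gE k) * r * og k ((gU k (m+(k:ℤ)))⁻¹ * (gD k)⁻¹),
            pos_add k (pos_mul k (pos_Ck k hk _) (pos_og k _))
              (pos_mul k (pos_mul k (pos_og k _) hr) (pos_og k _)), ?_⟩
          rw [uu_bwd_e k hk m h1 (by omega)
            (by rw [Int.even_iff]; rw [Int.odd_iff] at hodd; omega), heq]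
          have hc : og k (gU k (m+(k:ℤ)-1) * (gU k (k:ℤ))⁻¹ * gU k 1) =
              og k (gU k (m+(k:ℤ)-1) * gE k) *
              og k ((gE k)⁻¹ * (gU k (k:ℤ))⁻¹ * gU k 1 * gD k * gU k (m+(k:ℤ))) *
              og k ((gU k (m+(k:ℤ)))⁻¹ * (gD k)⁻¹) := by
            rw [og_mul, og_mul]; congr 1; group
          rw [hc]
          noncomm_ring
        · intro heven
          obtain ⟨r, hr, heq⟩ := ihm.1 (by rw [Int.odd_iff]; rw [Int.even_iff] at heven; omega)
          rw [show m+1+(k:ℤ)-1 = m+(k:ℤ) from by ring] at heq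
          refine ⟨og k ((gE k)⁻¹ * (gU k (m+(k:ℤ)))⁻¹) * Ck k hk (m+(k:ℤ)) +
            og k ((gE k)⁻¹ * (gU k (m+(k:ℤ)))⁻¹) * r * og k (gD k * gU k (m+(k:ℤ)-1)),
            pos_add k (pos_mul k (pos_og k _) (pos_Ck k hk _))
              (pos_mul k (pos_mul k (pos_og k _) hr) (pos_og k _)), ?_⟩
          rw [uu_bwd_o k hk m h1 (by omega)
            (by rw [Int.odd_iff]; rw [Int.even_iff] at heven; omega), heq]
          have hc : og k ((gE k)⁻¹ * (gU k (k:ℤ))⁻¹ * gU k 1 * gD k * gU k (m+(k:ℤ)-1)) =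
              og k ((gE k)⁻¹ * (gU k (m+(k:ℤ)))⁻¹) *
              og k (gU k (m+(k:ℤ)) * (gU k (k:ℤ))⁻¹ * gU k 1) *
              og k (gD k * gU k (m+(k:ℤ)-1)) := by
            rw [og_mul, og_mul]; congr 1; group
          rw [hc]
          noncomm_ring
  exact fun m h1 h2 => main (1-m).toNat m h1 h2 rfl


/-! ### Transfer machinery for positivity -/

def Tz : KG k := gU k 1 * (gU k (k:ℤ))⁻¹ * gU k 1
def rZ : KAlg k := uu k hk (2-(k:ℤ)) - og k (Tz k)
def qW : KG k := (gD k)⁻¹ * (gU k (k:ℤ))⁻¹ * gU k 1 * gD k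
def gW : KG k := (gD k)⁻¹ * gE k
def sW : KG k := (gU k 1)⁻¹ * gU k (k:ℤ)
def gP : KG k := gD k * (gE k)⁻¹
def Pdef : KAlg k :=
  og k ((gD k)⁻¹ * (gU k 1)⁻¹) * (rZ k hk * og k (gD k) + og k (gU k (k:ℤ) * gE k))
def QpA : KAlg k := og k ((gU k 1)⁻¹) * uu k hk (2-(k:ℤ)) * og k (gP k)

lemma rZ_eq : uu k hk (2-(k:ℤ)) = og k (Tz k) + rZ k hk := by unfold rZ; abel

lemma rZ_pos (ko : Odd k) : Pos k (rZ k hk) := by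
  have hkz : (3:ℤ) ≤ (k:ℤ) := by exact_mod_cast hk
  have ko' : (k:ℤ) % 2 = 1 := Int.odd_iff.mp (Int.odd_coe_nat k |>.mpr ko)
  obtain ⟨r, hr, heq⟩ := (Gspec k hk ko (2-(k:ℤ)) (le_refl _) (by omega)).1
    (by rw [Int.odd_iff]; omega)
  rw [show 2-(k:ℤ)+(k:ℤ)-1 = 1 from by ring] at heq
  have h : rZ k hk = r := by unfold rZ Tz; rw [heq]; abel
  rw [h]; exact hr

lemma Pdef_pos (ko : Odd k) : Pos k (Pdef k hk) :=
  pos_mul k (pos_og k _) (pos_add k (pos_mul k (rZ_pos k hk ko) (pos_og k _)) (pos_og k _))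

lemma QpA_pos : Pos k (QpA k hk) := by
  have hkz : (3:ℤ) ≤ (k:ℤ) := by exact_mod_cast hk
  exact pos_mul k (pos_mul k (pos_og k _) (pos_win k hk _ (by omega) (by omega))) (pos_og k _)

lemma Hh_def' : Hh k hk = og k ((gU k 1)⁻¹) *
    (uu k hk (2-(k:ℤ)) * og k (gD k) + og k (gU k (k:ℤ) * gE k)) := by
  have hkz : (3:ℤ) ≤ (k:ℤ) := by exact_mod_cast hk
  unfold Hh
  rw [← uu_win k hk (2-(k:ℤ)) (by omega) (by omega)]

lemma chainE (ko : Odd k) (n0 : ℤ) (he : Even n0) :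
    uu k hk (n0+(k:ℤ)-1) = Pdef k hk * uu k hk n0 +
      (og k (qW k) * uu k hk n0 - og k (gW k) * uu k hk (n0+1-(k:ℤ))) := by
  have hE := (linfull k hk ko n0).1 he
  unfold LinE at hE
  have hsol := og_solve_l k (gD k) (uu k hk (n0+(k:ℤ)-1))
    (Hh k hk * uu k hk n0 - og k (gE k) * uu k hk (n0+1-(k:ℤ))) (by rw [← hE]; abel)
  have hA : og k ((gD k)⁻¹) * Hh k hk = og k (qW k) + Pdef k hk := by
    rw [Hh_def', rZ_eq k hk]
    have hq : og k (qW k) = og k ((gD k)⁻¹ * (gU k 1)⁻¹) * og k (Tz k) * og k (gD k) := by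
      rw [og_mul, og_mul]; congr 1; unfold qW Tz; group
    have hsplit : og k ((gD k)⁻¹ * (gU k 1)⁻¹) = og k ((gD k)⁻¹) * og k ((gU k 1)⁻¹) :=
      (og_mul k _ _).symm
    rw [hq]
    unfold Pdef
    rw [hsplit]
    noncomm_ring
  have hgW : og k ((gD k)⁻¹) * og k (gE k) = og k (gW k) := by
    rw [og_mul]; rfl
  rw [hsol, mul_sub, ← mul_assoc, ← mul_assoc, hA, hgW]
  noncomm_ring

lemma chainE2 (ko : Odd k) (n0 : ℤ) (he : Even n0) :
    og k (qW k) * uu k hk (n0+(k:ℤ)-1) - og k (gW k) * uu k hk n0 =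
      og k ((gD k)⁻¹ * (gU k (k:ℤ))⁻¹) * rZ k hk * og k (gD k) * uu k hk n0 +
      og k (qW k) * (og k (qW k) * uu k hk n0 - og k (gW k) * uu k hk (n0+1-(k:ℤ))) := by
  have hqP : og k (qW k) * Pdef k hk =
      og k ((gD k)⁻¹ * (gU k (k:ℤ))⁻¹) * rZ k hk * og k (gD k) + og k (gW k) := by
    unfold Pdef
    have h1 : og k (qW k) * og k ((gD k)⁻¹ * (gU k 1)⁻¹) =
        og k ((gD k)⁻¹ * (gU k (k:ℤ))⁻¹) := by
      rw [og_mul]; congr 1; unfold qW; group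
    have h2 : og k ((gD k)⁻¹ * (gU k (k:ℤ))⁻¹) * og k (gU k (k:ℤ) * gE k) =
        og k (gW k) := by
      rw [og_mul]; congr 1; unfold gW; group
    rw [← mul_assoc, h1, mul_add, ← mul_assoc, h2]
  calc og k (qW k) * uu k hk (n0+(k:ℤ)-1) - og k (gW k) * uu k hk n0
      = (og k (qW k) * Pdef k hk) * uu k hk n0 +
        og k (qW k) * (og k (qW k) * uu k hk n0 - og k (gW k) * uu k hk (n0+1-(k:ℤ))) -
        og k (gW k) * uu k hk n0 := by rw [chainE k hk ko n0 he]; noncomm_ring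
    _ = _ := by rw [hqP]; noncomm_ring

lemma chainO (ko : Odd k) (n0 : ℤ) (ho : Odd n0) :
    uu k hk (n0+(k:ℤ)-1) = uu k hk n0 * og k (sW k) +
      (uu k hk n0 * QpA k hk - uu k hk (n0+1-(k:ℤ)) * og k (gP k)) := by
  have hO := (linfull k hk ko n0).2 ho
  unfold LinO at hO
  have hsol := og_solve_r k (gE k) (uu k hk (n0+(k:ℤ)-1))
    (uu k hk n0 * Hh k hk - uu k hk (n0+1-(k:ℤ)) * og k (gD k)) (by rw [← hO]; abel)
  have h2 : og k (gD k) * og k ((gE k)⁻¹) = og k (gP k) := by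
    rw [og_mul]; rfl
  have hA : Hh k hk * og k ((gE k)⁻¹) = QpA k hk + og k (sW k) := by
    have h1 : og k ((gU k 1)⁻¹) * og k (gU k (k:ℤ) * gE k) * og k ((gE k)⁻¹) =
        og k (sW k) := by
      rw [og_mul, og_mul]; congr 1; unfold sW; group
    calc Hh k hk * og k ((gE k)⁻¹)
        = og k ((gU k 1)⁻¹) * uu k hk (2-(k:ℤ)) * (og k (gD k) * og k ((gE k)⁻¹)) +
          og k ((gU k 1)⁻¹) * og k (gU k (k:ℤ) * gE k) * og k ((gE k)⁻¹) := by
            rw [Hh_def']; noncomm_ring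
      _ = QpA k hk + og k (sW k) := by rw [h2, h1]; unfold QpA; rfl
  rw [hsol, sub_mul, mul_assoc, mul_assoc, hA, h2]
  noncomm_ring

lemma chainO2 (ko : Odd k) (n0 : ℤ) (ho : Odd n0) :
    uu k hk (n0+(k:ℤ)-1) * QpA k hk - uu k hk n0 * og k (gP k) =
      uu k hk n0 * (og k ((gU k 1)⁻¹ * gU k (k:ℤ) * (gU k 1)⁻¹) * rZ k hk * og k (gP k)) +
      (uu k hk n0 * QpA k hk - uu k hk (n0+1-(k:ℤ)) * og k (gP k)) * QpA k hk := by
  have hsQ : og k (sW k) * QpA k hk =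
      og k (gP k) + og k ((gU k 1)⁻¹ * gU k (k:ℤ) * (gU k 1)⁻¹) * rZ k hk * og k (gP k) := by
    have h1 : og k (sW k) * og k ((gU k 1)⁻¹) =
        og k ((gU k 1)⁻¹ * gU k (k:ℤ) * (gU k 1)⁻¹) := by
      rw [og_mul]
      have hw : sW k * (gU k 1)⁻¹ = (gU k 1)⁻¹ * gU k (k:ℤ) * (gU k 1)⁻¹ := by
        unfold sW; group
      rw [hw]
    have h2 : og k ((gU k 1)⁻¹ * gU k (k:ℤ) * (gU k 1)⁻¹) * og k (Tz k) = 1 := by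
      rw [og_mul]
      have hw : ((gU k 1)⁻¹ * gU k (k:ℤ) * (gU k 1)⁻¹) * Tz k = 1 := by unfold Tz; group
      rw [hw]
      exact og_one k
    calc og k (sW k) * QpA k hk
        = (og k (sW k) * og k ((gU k 1)⁻¹)) * uu k hk (2-(k:ℤ)) * og k (gP k) := by
            unfold QpA; noncomm_ring
      _ = (og k ((gU k 1)⁻¹ * gU k (k:ℤ) * (gU k 1)⁻¹) * og k (Tz k)) * og k (gP k) +
          og k ((gU k 1)⁻¹ * gU k (k:ℤ) * (gU k 1)⁻¹) * rZ k hk * og k (gP k) := by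
            rw [h1, rZ_eq k hk]; noncomm_ring
      _ = _ := by rw [h2, one_mul]
  calc uu k hk (n0+(k:ℤ)-1) * QpA k hk - uu k hk n0 * og k (gP k)
      = uu k hk n0 * (og k (sW k) * QpA k hk) +
        (uu k hk n0 * QpA k hk - uu k hk (n0+1-(k:ℤ)) * og k (gP k)) * QpA k hk -
        uu k hk n0 * og k (gP k) := by rw [chainO k hk ko n0 ho]; noncomm_ring
    _ = _ := by rw [hsQ]; noncomm_ring


lemma Veven (ko : Odd k) (n : ℤ) (h1 : (k:ℤ)+1 ≤ n) (h2 : n ≤ 2*(k:ℤ)) (he : Even n) :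
    Pos k (og k (qW k) * uu k hk n - og k (gW k) * uu k hk (n+1-(k:ℤ))) := by
  have hkz : (3:ℤ) ≤ (k:ℤ) := by exact_mod_cast hk
  have hpos' : Pos k (uu k hk (n+1-(k:ℤ))) := by
    rcases le_or_gt (n+1-(k:ℤ)) (k:ℤ) with hh | hh
    · exact pos_win k hk _ (by omega) hh
    · exact pos2k k hk ko _ (by omega) (by omega)
  have ho1 : Odd (n-1) := by rw [Int.odd_iff]; rw [Int.even_iff] at he; omega
  obtain ⟨r, hr, heq⟩ := (Fspec k hk ko (n-1) (by omega) (by omega)).1 ho1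
  rw [show n-1+1-(k:ℤ) = n-(k:ℤ) from by ring] at heq
  have key : og k (qW k) * uu k hk n - og k (gW k) * uu k hk (n+1-(k:ℤ)) =
      og k ((gD k)⁻¹ * (gU k (k:ℤ))⁻¹ * gU k 1 * (gU k (n-(k:ℤ)))⁻¹) * Ck k hk n +
      og k ((gD k)⁻¹ * (gU k (k:ℤ))⁻¹ * gU k 1 * (gU k (n-(k:ℤ)))⁻¹) * r * og k (gE k) *
        uu k hk (n+1-(k:ℤ)) := by
    rw [ulin_e k hk ko n h1 h2 he, heq]
    have h1' : og k (qW k) * og k ((gU k (n-(k:ℤ)) * gD k)⁻¹) =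
        og k ((gD k)⁻¹ * (gU k (k:ℤ))⁻¹ * gU k 1 * (gU k (n-(k:ℤ)))⁻¹) := by
      rw [og_mul]
      have hw : qW k * (gU k (n-(k:ℤ)) * gD k)⁻¹ =
          (gD k)⁻¹ * (gU k (k:ℤ))⁻¹ * gU k 1 * (gU k (n-(k:ℤ)))⁻¹ := by
        unfold qW; group
      rw [hw]
    have hc : og k ((gD k)⁻¹ * (gU k (k:ℤ))⁻¹ * gU k 1 * (gU k (n-(k:ℤ)))⁻¹) *
        og k (gU k (n-(k:ℤ)) * (gU k 1)⁻¹ * gU k (k:ℤ)) * og k (gE k) = og k (gW k) := by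
      rw [og_mul, og_mul]
      have hw : (gD k)⁻¹ * (gU k (k:ℤ))⁻¹ * gU k 1 * (gU k (n-(k:ℤ)))⁻¹ *
          (gU k (n-(k:ℤ)) * (gU k 1)⁻¹ * gU k (k:ℤ)) * gE k = gW k := by
        unfold gW; group
      rw [hw]
    rw [← mul_assoc, h1', ← hc]
    noncomm_ring
  rw [key]
  exact pos_add k (pos_mul k (pos_og k _) (pos_Ck k hk _))
    (pos_mul k (pos_mul k (pos_mul k (pos_og k _) hr) (pos_og k _)) hpos')

lemma Wodd (ko : Odd k) (n : ℤ) (h1 : (k:ℤ)+1 ≤ n) (h2 : n ≤ 2*(k:ℤ)) (ho : Odd n) :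
    Pos k (uu k hk n * QpA k hk - uu k hk (n+1-(k:ℤ)) * og k (gP k)) := by
  have hkz : (3:ℤ) ≤ (k:ℤ) := by exact_mod_cast hk
  have ko' : (k:ℤ) % 2 = 1 := Int.odd_iff.mp (Int.odd_coe_nat k |>.mpr ko)
  have h2' : n ≤ 2*(k:ℤ)-1 := by rw [Int.odd_iff] at ho; omega
  obtain ⟨r, hr, heq⟩ := (Fspec k hk ko n (by omega) h2').1 ho
  have key : uu k hk n * QpA k hk - uu k hk (n+1-(k:ℤ)) * og k (gP k) =
      og k (gU k (n+1-(k:ℤ)) * (gU k 1)⁻¹ * gU k (k:ℤ)) * og k ((gU k 1)⁻¹) * rZ k hk *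
        og k (gP k) +
      r * (og k ((gU k 1)⁻¹) * (og k (Tz k) + rZ k hk) * og k (gP k)) := by
    have hQ : QpA k hk = og k ((gU k 1)⁻¹) * (og k (Tz k) + rZ k hk) * og k (gP k) := by
      unfold QpA
      rw [rZ_eq k hk]
    have hcancel : og k (gU k (n+1-(k:ℤ))) =
        og k (gU k (n+1-(k:ℤ)) * (gU k 1)⁻¹ * gU k (k:ℤ)) * og k ((gU k 1)⁻¹) *
          og k (Tz k) := by
      rw [og_mul, og_mul]
      congr 1
      unfold Tz
      group
    rw [heq, uu_gen k hk (n+1-(k:ℤ)) (by omega) (by omega), hQ, hcancel]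
    noncomm_ring
  rw [key]
  exact pos_add k
    (pos_mul k (pos_mul k (pos_mul k (pos_og k _) (pos_og k _)) (rZ_pos k hk ko)) (pos_og k _))
    (pos_mul k hr (pos_mul k (pos_mul k (pos_og k _)
      (pos_add k (pos_og k _) (rZ_pos k hk ko))) (pos_og k _)))

lemma posE (ko : Odd k) : ∀ n : ℤ, (k:ℤ)+1 ≤ n → Even n →
    Pos k (uu k hk n) ∧
    Pos k (og k (qW k) * uu k hk n - og k (gW k) * uu k hk (n+1-(k:ℤ))) := by
  have hkz : (3:ℤ) ≤ (k:ℤ) := by exact_mod_cast hk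
  have ko' : (k:ℤ) % 2 = 1 := Int.odd_iff.mp (Int.odd_coe_nat k |>.mpr ko)
  have main : ∀ i : ℕ, ∀ n : ℤ, (k:ℤ)+1 ≤ n → Even n → (n-((k:ℤ)+1)).toNat = i →
      Pos k (uu k hk n) ∧
      Pos k (og k (qW k) * uu k hk n - og k (gW k) * uu k hk (n+1-(k:ℤ))) := by
    intro i
    induction i using Nat.strong_induction_on with
    | _ i ih =>
      intro n h1 he hni
      rcases le_or_gt n (2*(k:ℤ)) with h2 | h2
      · exact ⟨pos2k k hk ko n h1 h2, Veven k hk ko n h1 h2 he⟩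
      · have he0 : Even (n-((k:ℤ)-1)) := by rw [Int.even_iff] at he ⊢; omega
        have ihm := ih (n-((k:ℤ)-1)-((k:ℤ)+1)).toNat (by omega) (n-((k:ℤ)-1))
          (by omega) he0 rfl
        have hce := chainE k hk ko (n-((k:ℤ)-1)) he0
        have hce2 := chainE2 k hk ko (n-((k:ℤ)-1)) he0
        rw [show n-((k:ℤ)-1)+(k:ℤ)-1 = n from by ring] at hce hce2
        constructor
        · rw [hce]
          exact pos_add k (pos_mul k (Pdef_pos k hk ko) ihm.1) ihm.2
        · rw [show n+1-(k:ℤ) = n-((k:ℤ)-1) from by ring, hce2]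
          exact pos_add k (pos_mul k (pos_mul k (pos_mul k (pos_og k _)
            (rZ_pos k hk ko)) (pos_og k _)) ihm.1) (pos_mul k (pos_og k _) ihm.2)
  exact fun n h1 he => main (n-((k:ℤ)+1)).toNat n h1 he rfl

lemma posO (ko : Odd k) : ∀ n : ℤ, (k:ℤ)+1 ≤ n → Odd n →
    Pos k (uu k hk n) ∧
    Pos k (uu k hk n * QpA k hk - uu k hk (n+1-(k:ℤ)) * og k (gP k)) := by
  have hkz : (3:ℤ) ≤ (k:ℤ) := by exact_mod_cast hk
  have ko' : (k:ℤ) % 2 = 1 := Int.odd_iff.mp (Int.odd_coe_nat k |>.mpr ko)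
  have main : ∀ i : ℕ, ∀ n : ℤ, (k:ℤ)+1 ≤ n → Odd n → (n-((k:ℤ)+1)).toNat = i →
      Pos k (uu k hk n) ∧
      Pos k (uu k hk n * QpA k hk - uu k hk (n+1-(k:ℤ)) * og k (gP k)) := by
    intro i
    induction i using Nat.strong_induction_on with
    | _ i ih =>
      intro n h1 ho hni
      rcases le_or_gt n (2*(k:ℤ)) with h2 | h2
      · exact ⟨pos2k k hk ko n h1 h2, Wodd k hk ko n h1 h2 ho⟩
      · have ho0 : Odd (n-((k:ℤ)-1)) := by rw [Int.odd_iff] at ho ⊢; omega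
        have ihm := ih (n-((k:ℤ)-1)-((k:ℤ)+1)).toNat (by omega) (n-((k:ℤ)-1))
          (by omega) ho0 rfl
        have hco := chainO k hk ko (n-((k:ℤ)-1)) ho0
        have hco2 := chainO2 k hk ko (n-((k:ℤ)-1)) ho0
        rw [show n-((k:ℤ)-1)+(k:ℤ)-1 = n from by ring] at hco hco2
        constructor
        · rw [hco]
          exact pos_add k (pos_mul k ihm.1 (pos_og k _))
            (by
              have : Pos k (uu k hk (n-((k:ℤ)-1)) * QpA k hk -
                uu k hk (n-((k:ℤ)-1)+1-(k:ℤ)) * og k (gP k)) := ihm.2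
              exact this)
        · rw [show n+1-(k:ℤ) = n-((k:ℤ)-1) from by ring, hco2]
          exact pos_add k (pos_mul k ihm.1 (pos_mul k (pos_mul k (pos_og k _)
            (rZ_pos k hk ko)) (pos_og k _))) (pos_mul k ihm.2 (QpA_pos k hk))
  exact fun n h1 ho => main (n-((k:ℤ)+1)).toNat n h1 ho rfl

lemma pos_all (ko : Odd k) (n : ℤ) : Pos k (uu k hk n) := by
  have hkz : (3:ℤ) ≤ (k:ℤ) := by exact_mod_cast hk
  rcases le_or_gt (2-(k:ℤ)) n with h1 | h1
  · rcases le_or_gt n (k:ℤ) with h2 | h2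
    · exact pos_win k hk n h1 h2
    · rcases Int.even_or_odd n with he | ho
      · exact (posE k hk ko n (by omega) he).1
      · exact (posO k hk ko n (by omega) ho).1
  · rw [uu_mirror k hk n h1]
    apply pos_phi
    rcases Int.even_or_odd ((k:ℤ)+1-n) with he | ho
    · exact (posE k hk ko _ (by omega) he).1
    · exact (posO k hk ko _ (by omega) ho).1

end Lemmas

end KP

/-- For odd `k ≥ 3`, the noncommutative recursion
`U_{n-k} D U_n = C_n + U_{n-1} D̄ U_{n+1-k}` (`n` even),
`U_n D̄ U_{n-k} = C_n + U_{n+1-k} D U_{n-1}` (`n` odd)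
has a solution `(u_n)_{n ∈ ℤ}` in `ℤ F_{2k+1}` extending the free generators
`U_1, …, U_k`, each `u_n` being a finite sum of elements of the free group; moreover
there is a conserved quantity `H ∈ ℤ F_{2k+1}` with
`D̄ u_{n+1-k} + D u_{n+k-1} = H u_n` (`n` even) and
`u_{n+1-k} D + u_{n+k-1} D̄ = u_n H` (`n` odd). -/
theorem kontsevich_recursion (k : ℕ) (hk : 3 ≤ k) (hodd : Odd k) :
    ∃ u : ℤ → KAlg k,
      (∀ (n : ℤ) (h1 : 1 ≤ n) (h2 : n ≤ (k : ℤ)),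
        u n = MonoidAlgebra.of ℤ (KG k)
          (FreeGroup.of (KGen.U ⟨(n - 1).toNat, by omega⟩))) ∧
      (∀ n : ℤ, ∃ s : Multiset (KG k),
        u n = (s.map (fun g => MonoidAlgebra.of ℤ (KG k) g)).sum) ∧
      (∀ n : ℤ,
        (Even n →
          u (n - k) * Dk k * u n = Ck k hk n + u (n - 1) * Dbark k * u (n + 1 - k)) ∧
        (Odd n →
          u n * Dbark k * u (n - k) = Ck k hk n + u (n + 1 - k) * Dk k * u (n - 1))) ∧
      ∃ H : KAlg k,
        ∀ n : ℤ,
          (Even n → Dbark k * u (n + 1 - k) + Dk k * u (n + k - 1) = H * u n) ∧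
          (Odd n → u (n + 1 - k) * Dk k + u (n + k - 1) * Dbark k = u n * H) := by
  refine ⟨KP.uu k hk, ?_, ?_, ?_, KP.Hh k hk, ?_⟩
  · intro n h1 h2
    rw [KP.uu_gen k hk n h1 h2, KP.gU_eq k k hk n h1 h2]
    rfl
  · intro n
    exact KP.pos_all k hk hodd n
  · intro n
    obtain ⟨hE, hO⟩ := KP.quadfull k hk hodd n
    constructor
    · intro he
      have h := hE he
      unfold KP.QuadE at h
      exact h
    · intro ho
      have h := hO ho
      unfold KP.QuadO at h
      exact h
  · intro n
    obtain ⟨hE, hO⟩ := KP.linfull k hk hodd n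
    constructor
    · intro he
      have h := hE he
      unfold KP.LinE at h
      exact h
    · intro ho
      have h := hO ho
      unfold KP.LinO at h
      exact h

end
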